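/- For every n ≥ 2 the set Q_n = {t > 0 : S_i(t) ≠ 0 for all 1 ≤ i < n, and S_n(t) = 0} is nonempty and has a greatest element b_n; the sequence (b_n)_{n≥2} is strictly increasing; and for every t > b_n one has S_i(t) > 0 for all 1 ≤ i ≤ n, and the function t ↦ S_n(t) is strictly increasing and continuous on the interval (b_n, ∞). -/

import Mathlib

open Finset Set Filter

/-- `XS t n = (x_n(t), S_n(t))`, defined recursively by `x_1(t) = t`, `S_1(t) = t`,
`x_{n+1}(t) = x_n(t) - 1/S_n(t)` and `S_{n+1}(t) = S_n(t) + x_{n+1}(t)`.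
(When some `S_i(t) = 0` the junk convention `1/0 = 0` of real division applies, but the
statements below only concern parameters `t` for which the relevant `S_i(t) ≠ 0`.) -/
noncomputable def XS (t : ℝ) : ℕ → ℝ × ℝ
  | 0 => (0, 0)
  | 1 => (t, t)
  | (n + 2) =>
      ((XS t (n + 1)).1 - 1 / (XS t (n + 1)).2,
        (XS t (n + 1)).2 + ((XS t (n + 1)).1 - 1 / (XS t (n + 1)).2))

/-- `x_n(t)`, the `n`-th term of the recursion started at `x_1(t) = t`. -/
noncomputable def xf (n : ℕ) (t : ℝ) : ℝ := (XS t n).1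

/-- `S_n(t) = x_1(t) + ... + x_n(t)`, the `n`-th partial sum of the recursion started at
`x_1(t) = t`. -/
noncomputable def Sf (n : ℕ) (t : ℝ) : ℝ := (XS t n).2

/-- `R_n = {t > 0 : S_i(t) ≠ 0 for 1 ≤ i < n, and x_n(t) = 0}`. -/
def Rset (n : ℕ) : Set ℝ :=
  {t | 0 < t ∧ (∀ i, 1 ≤ i → i < n → Sf i t ≠ 0) ∧ xf n t = 0}

/-- `Q_n = {t > 0 : S_i(t) ≠ 0 for 1 ≤ i < n, and S_n(t) = 0}`. -/
def Qset (n : ℕ) : Set ℝ :=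
  {t | 0 < t ∧ (∀ i, 1 ≤ i → i < n → Sf i t ≠ 0) ∧ Sf n t = 0}

/-- For every `n ≥ 2`, `Q_n` has a greatest element `b_n` (in particular it is nonempty);
the sequence `(b_n)_{n ≥ 2}` is strictly increasing; for every `t > b_n` all the partial sums
`S_i(t)` (for `1 ≤ i ≤ n`) are positive; and `t ↦ S_n(t)` is strictly increasing and
continuous on `(b_n, ∞)`. -/
lemma xf_one (t : ℝ) : xf 1 t = t := rfl
lemma Sf_one (t : ℝ) : Sf 1 t = t := rfl
lemma xf_succ (n : ℕ) (hn : 1 ≤ n) (t : ℝ) : xf (n+1) t = xf n t - 1 / Sf n t := by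
  cases n with
  | zero => omega
  | succ m => rfl
lemma Sf_succ (n : ℕ) (hn : 1 ≤ n) (t : ℝ) : Sf (n+1) t = Sf n t + xf (n+1) t := by
  cases n with
  | zero => omega
  | succ m => rfl
def Good (n : ℕ) (b : ℝ) : Prop :=
  IsGreatest (Qset n) b ∧
  (∀ t, b < t → ∀ i, 1 ≤ i → i ≤ n → 0 < Sf i t) ∧
  StrictMonoOn (xf n) (Set.Ioi b) ∧ ContinuousOn (xf n) (Set.Ioi b) ∧
  StrictMonoOn (Sf n) (Set.Ioi b) ∧ ContinuousOn (Sf n) (Set.Ioi b)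

lemma Sf_two (t : ℝ) : Sf 2 t = 2 * t - 1 / t := by
  rw [show (2:ℕ) = 1 + 1 from rfl, Sf_succ 1 le_rfl, xf_succ 1 le_rfl, Sf_one, xf_one]
  ring

lemma xf_two (t : ℝ) : xf 2 t = t - 1 / t := by
  rw [show (2:ℕ) = 1 + 1 from rfl, xf_succ 1 le_rfl, Sf_one, xf_one]

lemma Smono2 : StrictMonoOn (Sf 2) (Set.Ioi (0:ℝ)) := by
  intro a ha c hc hac
  simp only [Set.mem_Ioi] at ha hc
  rw [Sf_two, Sf_two]
  have : 1 / c < 1 / a := one_div_lt_one_div_of_lt ha hac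
  linarith

lemma xmono2 : StrictMonoOn (xf 2) (Set.Ioi (0:ℝ)) := by
  intro a ha c hc hac
  simp only [Set.mem_Ioi] at ha hc
  rw [xf_two, xf_two]
  have : 1 / c < 1 / a := one_div_lt_one_div_of_lt ha hac
  linarith

lemma good_two : Good 2 (Real.sqrt 2 / 2) := by
  have hs0 : (0:ℝ) < Real.sqrt 2 := by positivity
  have hs2 : Real.sqrt 2 * Real.sqrt 2 = 2 := Real.mul_self_sqrt (by norm_num)
  set b : ℝ := Real.sqrt 2 / 2 with hbdef
  have hb0 : 0 < b := by positivity
  have hSb : Sf 2 b = 0 := by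
    rw [Sf_two]
    have h1 : (1:ℝ) / b = Real.sqrt 2 := by
      rw [hbdef, one_div_div]; exact Real.div_sqrt
    rw [h1, hbdef]; ring
  have hmem : b ∈ Qset 2 := by
    refine ⟨hb0, fun i h1 h2 => ?_, hSb⟩
    have : i = 1 := by omega
    subst this; rw [Sf_one]; exact hb0.ne'
  have hpos : ∀ t, b < t → ∀ i, 1 ≤ i → i ≤ 2 → 0 < Sf i t := by
    intro t ht i h1 h2
    have ht0 : 0 < t := hb0.trans ht
    interval_cases i
    · rw [Sf_one]; exact ht0
    · have := Smono2 hb0 ht0 ht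
      rw [hSb] at this; exact this
  refine ⟨⟨hmem, ?_⟩, hpos, ?_, ?_, ?_, ?_⟩
  · rintro t ⟨ht0, _, hSt⟩
    by_contra h
    push_neg at h
    have := Smono2 hb0 ht0 h
    rw [hSb, hSt] at this; exact lt_irrefl 0 this
  · exact xmono2.mono (fun t ht => lt_trans hb0 ht)
  · have : ∀ t ∈ Set.Ioi b, xf 2 t = t - 1/t := fun t _ => xf_two t
    refine ContinuousOn.congr ?_ this
    exact continuousOn_id.sub (continuousOn_const.div continuousOn_id
      (fun t ht => (lt_trans hb0 ht).ne'))
  · exact Smono2.mono (fun t ht => lt_trans hb0 ht)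
  · have : ∀ t ∈ Set.Ioi b, Sf 2 t = 2*t - 1/t := fun t _ => Sf_two t
    refine ContinuousOn.congr ?_ this
    exact (continuousOn_const.mul continuousOn_id).sub
      (continuousOn_const.div continuousOn_id (fun t ht => (lt_trans hb0 ht).ne'))

lemma cont_at (n : ℕ) (hn : 1 ≤ n) (t₀ : ℝ) (h : ∀ i, 1 ≤ i → i < n → Sf i t₀ ≠ 0) :
    ContinuousAt (xf n) t₀ ∧ ContinuousAt (Sf n) t₀ := by
  induction n with
  | zero => omega
  | succ m ih =>
    rcases Nat.eq_or_lt_of_le hn with h1 | h1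
    · have hx : xf 1 = fun t : ℝ => t := rfl
      have hS : Sf 1 = fun t : ℝ => t := rfl
      rw [← h1, hx, hS]
      exact ⟨continuousAt_id, continuousAt_id⟩
    · have hm : 1 ≤ m := by omega
      obtain ⟨ihx, ihS⟩ := ih hm (fun i h1 h2 => h i h1 (by omega))
      have hne : Sf m t₀ ≠ 0 := h m hm (by omega)
      have hx : xf (m+1) = fun t => xf m t - 1 / Sf m t := funext (xf_succ m hm)
      have hxc : ContinuousAt (xf (m+1)) t₀ := by
        rw [hx]; exact ihx.sub (continuousAt_const.div ihS hne)
      refine ⟨hxc, ?_⟩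
      have hS : Sf (m+1) = fun t => Sf m t + xf (m+1) t := funext (Sf_succ m hm)
      rw [hS]; exact ihS.add hxc

lemma grow (t : ℝ) (i : ℕ) : 1 ≤ i → (i : ℝ) + 1 ≤ t → (t - i + 1 ≤ xf i t ∧ 1 ≤ Sf i t) := by
  induction i with
  | zero => omega
  | succ m ih =>
    intro _ ht
    rcases Nat.eq_zero_or_pos m with rfl | hm
    · rw [xf_one, Sf_one]
      constructor <;> push_cast at ht ⊢ <;> linarith
    · have hm1 : (1:ℕ) ≤ m := hm
      have hmt : (m : ℝ) + 1 ≤ t := by push_cast at ht ⊢; linarith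
      obtain ⟨ihx, ihS⟩ := ih hm1 hmt
      have hS0 : (0:ℝ) < Sf m t := by linarith
      have hdiv : 1 / Sf m t ≤ 1 := by
        rw [div_le_one hS0]; linarith
      have hdiv0 : 0 < 1 / Sf m t := by positivity
      rw [xf_succ m hm1, Sf_succ m hm1, xf_succ m hm1]
      push_cast at ht ⊢
      constructor <;> linarith

lemma step (n : ℕ) (hn : 2 ≤ n) (b : ℝ) (hb : Good n b) :
    ∃ b', b < b' ∧ Good (n+1) b' := by
  obtain ⟨⟨⟨hb0, hbS, hbS0⟩, hub⟩, hpos, hxmono, hxcont, hSmono, hScont⟩ := hb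
  have hn1 : 1 ≤ n := by omega
  -- positivity of Sf n on Ioi b
  have hSnpos : ∀ t ∈ Set.Ioi b, 0 < Sf n t := fun t ht => hpos t ht n hn1 le_rfl
  -- strict monotonicity of xf (n+1) and Sf (n+1) on Ioi b
  have hx1mono : StrictMonoOn (xf (n+1)) (Set.Ioi b) := by
    intro a ha c hc hac
    rw [xf_succ n hn1, xf_succ n hn1]
    have h1 : xf n a < xf n c := hxmono ha hc hac
    have h2 : 1 / Sf n c ≤ 1 / Sf n a :=
      one_div_le_one_div_of_le (hSnpos a ha) (hSmono ha hc hac).le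
    linarith
  have hS1mono : StrictMonoOn (Sf (n+1)) (Set.Ioi b) := by
    intro a ha c hc hac
    rw [Sf_succ n hn1, Sf_succ n hn1]
    exact add_lt_add (hSmono ha hc hac) (hx1mono ha hc hac)
  have hx1cont : ContinuousOn (xf (n+1)) (Set.Ioi b) := by
    have e : ∀ t ∈ Set.Ioi b, xf (n+1) t = xf n t - 1 / Sf n t :=
      fun t _ => xf_succ n hn1 t
    exact ContinuousOn.congr
      (hxcont.sub (continuousOn_const.div hScont (fun t ht => (hSnpos t ht).ne'))) e
  have hS1cont : ContinuousOn (Sf (n+1)) (Set.Ioi b) := by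
    have e : ∀ t ∈ Set.Ioi b, Sf (n+1) t = Sf n t + xf (n+1) t :=
      fun t _ => Sf_succ n hn1 t
    exact ContinuousOn.congr (hScont.add hx1cont) e
  -- Sf (n+1) tends to -∞ as t → b⁺
  obtain ⟨hxcb, hScb⟩ := cont_at n hn1 b hbS
  have t1 : Tendsto (Sf n) (nhdsWithin b (Set.Ioi b)) (nhdsWithin 0 (Set.Ioi 0)) := by
    rw [tendsto_nhdsWithin_iff]
    constructor
    · have := hScb.tendsto
      rw [hbS0] at this
      exact this.mono_left nhdsWithin_le_nhds
    · exact eventually_mem_nhdsWithin.mono (fun t ht => hSnpos t ht)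
  have t2 : Tendsto (fun t => 1 / Sf n t) (nhdsWithin b (Set.Ioi b)) atTop := by
    have := tendsto_inv_nhdsGT_zero.comp t1
    simpa [one_div, Function.comp_def] using this
  have t3 : Tendsto (fun t => Sf n t + xf n t) (nhdsWithin b (Set.Ioi b)) (nhds (xf n b)) := by
    have := (hScb.tendsto.add hxcb.tendsto).mono_left
      (nhdsWithin_le_nhds (s := Set.Ioi b))
    rw [hbS0, zero_add] at this
    exact this
  have t4 : Tendsto (Sf (n+1)) (nhdsWithin b (Set.Ioi b)) atBot := by
    have e : Sf (n+1) = fun t => (Sf n t + xf n t) - 1 / Sf n t := by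
      funext t
      rw [Sf_succ n hn1, xf_succ n hn1]; ring
    rw [e]
    have t2' : Tendsto (fun t => -(1 / Sf n t)) (nhdsWithin b (Set.Ioi b)) atBot :=
      tendsto_neg_atTop_atBot.comp t2
    have := t3.add_atBot t2'
    simpa [sub_eq_add_neg] using this
  have hneg : ∃ t, t ∈ Set.Ioi b ∧ Sf (n+1) t < 0 := by
    have h1 : ∀ᶠ t in nhdsWithin b (Set.Ioi b), Sf (n+1) t < 0 :=
      t4.eventually (eventually_lt_atBot 0)
    obtain ⟨t, ht1, ht2⟩ := (h1.and eventually_mem_nhdsWithin).exists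
    exact ⟨t, ht2, ht1⟩
  obtain ⟨tneg, htneg_mem, htneg⟩ := hneg
  -- positive point
  set tpos : ℝ := max (tneg + 1) ((n:ℝ) + 2) with htposdef
  have htpos_big : (n:ℝ) + 1 + 1 ≤ tpos := by
    have := le_max_right (tneg + 1) ((n:ℝ) + 2)
    linarith
  have hSpos : 0 < Sf (n+1) tpos := by
    have := (grow tpos (n+1) (by omega) (by push_cast; linarith)).2
    linarith
  have hlt : tneg < tpos := by
    have := le_max_left (tneg + 1) ((n:ℝ) + 2)
    linarith
  have htpos_mem : tpos ∈ Set.Ioi b := lt_trans htneg_mem hlt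
  -- IVT
  have hIcc : Set.Icc tneg tpos ⊆ Set.Ioi b := fun t ht => lt_of_lt_of_le htneg_mem ht.1
  have hivt := intermediate_value_Ioo hlt.le (hS1cont.mono hIcc)
  have h0mem : (0:ℝ) ∈ Set.Ioo (Sf (n+1) tneg) (Sf (n+1) tpos) := ⟨htneg, hSpos⟩
  obtain ⟨b', hb'mem, hb'eq⟩ := hivt h0mem
  have hbb' : b < b' := lt_trans htneg_mem hb'mem.1
  have hb'Ioi : b' ∈ Set.Ioi b := hbb'
  refine ⟨b', hbb', ⟨⟨⟨hb0.trans hbb', fun i h1 h2 => ?_, hb'eq⟩, ?_⟩, ?_, ?_, ?_, ?_, ?_⟩⟩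
  · exact (hpos b' hbb' i h1 (by omega)).ne'
  · rintro t ⟨ht0, htS, htS0⟩
    by_contra h
    push_neg at h
    have := hS1mono hb'Ioi (hbb'.trans h) h
    rw [hb'eq, htS0] at this
    exact lt_irrefl 0 this
  · intro t ht i h1 h2
    rcases Nat.lt_or_ge i (n+1) with h3 | h3
    · exact hpos t (hbb'.trans ht) i h1 (by omega)
    · have : i = n + 1 := by omega
      subst this
      have := hS1mono hb'Ioi (hbb'.trans ht) ht
      rw [hb'eq] at this
      exact this
  · exact hx1mono.mono (Set.Ioi_subset_Ioi hbb'.le)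
  · exact hx1cont.mono (Set.Ioi_subset_Ioi hbb'.le)
  · exact hS1mono.mono (Set.Ioi_subset_Ioi hbb'.le)
  · exact hS1cont.mono (Set.Ioi_subset_Ioi hbb'.le)

lemma key (n : ℕ) (hn : 2 ≤ n) : ∃ b, Good n b := by
  induction n, hn using Nat.le_induction with
  | base => exact ⟨Real.sqrt 2 / 2, good_two⟩
  | succ n hn ih =>
    obtain ⟨b, hb⟩ := ih
    obtain ⟨b', _, h⟩ := step n hn b hb
    exact ⟨b', h⟩

noncomputable def bb (n : ℕ) : ℝ := if h : 2 ≤ n then (key n h).choose else 0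

lemma bb_good (n : ℕ) (hn : 2 ≤ n) : Good n (bb n) := by
  rw [bb, dif_pos hn]
  exact (key n hn).choose_spec

lemma bb_succ_lt (n : ℕ) (hn : 2 ≤ n) : bb n < bb (n+1) := by
  obtain ⟨b', hlt, hg⟩ := step n hn (bb n) (bb_good n hn)
  have : bb (n+1) = b' := (bb_good (n+1) (by omega)).1.unique hg.1
  rw [this]; exact hlt

lemma bb_mono : StrictMonoOn bb (Set.Ici 2) := by
  have hstep : ∀ m, 2 ≤ m → ∀ k, bb m < bb (m + k + 1) := by
    intro m hm k
    induction k with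
    | zero => exact bb_succ_lt m hm
    | succ j ih =>
      have := bb_succ_lt (m + j + 1) (by omega)
      calc bb m < bb (m + j + 1) := ih
        _ < bb (m + (j+1) + 1) := by
          have h : m + (j+1) + 1 = (m+j+1)+1 := by omega
          rw [h]; exact this
  intro m hm k hk hmk
  have : k = m + (k - m - 1) + 1 := by
    simp only [Set.mem_Ici] at hm hk
    omega
  rw [this]
  exact hstep m hm (k - m - 1)


theorem Qset_isGreatest_and_properties :
    ∃ b : ℕ → ℝ,
      (∀ n, 2 ≤ n → IsGreatest (Qset n) (b n)) ∧
      StrictMonoOn b (Set.Ici 2) ∧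
      (∀ n, 2 ≤ n → ∀ t, b n < t → ∀ i, 1 ≤ i → i ≤ n → 0 < Sf i t) ∧
      (∀ n, 2 ≤ n →
        StrictMonoOn (Sf n) (Set.Ioi (b n)) ∧ ContinuousOn (Sf n) (Set.Ioi (b n))) := by
  refine ⟨bb, fun n hn => (bb_good n hn).1, bb_mono,
    fun n hn => (bb_good n hn).2.1,
    fun n hn => ⟨(bb_good n hn).2.2.2.2.1, (bb_good n hn).2.2.2.2.2⟩⟩
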